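/- Let v ∈ S_n be a 321-avoiding permutation. Then for every generator s_i, any two reduced words of v contain the same number of occurrences of the letter s_i; that is, the number of occurrences n_v(i) of s_i in a reduced word of v is independent of the choice of reduced word. -/

import Mathlib

open Polynomial

variable {B W : Type*} [Group W] {M : CoxeterMatrix B}

open scoped Classical in
/-- The diagrammatic R̃-polynomial, defined by recursion on the word read from its last letter.
`dRAux cs ws u` where `ws` is the reversed word. -/
noncomputable def dRAux (cs : CoxeterSystem M W) : List B → W → Polynomial ℕ
  | [], u => if u = 1 then 1 else 0
  | s :: rest, u =>
      if cs.length (u * cs.simple s) < cs.length u then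
        dRAux cs rest (u * cs.simple s)
      else
        dRAux cs rest (u * cs.simple s) + Polynomial.X * dRAux cs rest u

/-- The diagrammatic R̃-polynomial `𝓡_{u,w}(t) ∈ ℕ[t]`. -/
noncomputable def dR (cs : CoxeterSystem M W) (u : W) (w : List B) : Polynomial ℕ :=
  dRAux cs w.reverse u

/-- `w` is a reduced word for `v`. -/
def IsReducedWordFor (cs : CoxeterSystem M W) (w : List B) (v : W) : Prop :=
  cs.wordProd w = v ∧ w.length = cs.length v

/-- Bruhat order via the subword property. -/
def BruhatLE (cs : CoxeterSystem M W) (u v : W) : Prop :=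
  ∃ w w' : List B, IsReducedWordFor cs w v ∧ List.Sublist w' w ∧ IsReducedWordFor cs w' u
/-- The simple transposition `s_i = (i, i+1)` of `Fin n` (0-based indexing), for
`i : Fin (n - 1)`. -/
def simpleTransposition (n : ℕ) (i : Fin (n - 1)) : Equiv.Perm (Fin n) :=
  Equiv.swap ⟨i.1, by omega⟩ ⟨i.1 + 1, by omega⟩

/-- The Fibonacci polynomials: `F 0 = 1`, `F 1 = X`, `F (n+2) = X * F (n+1) + F n`. -/
noncomputable def fibPoly : ℕ → Polynomial ℕ
  | 0 => 1
  | 1 => Polynomial.X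
  | n + 2 => Polynomial.X * fibPoly (n + 1) + fibPoly n

/-- A UD-word ("up and down" word): a word of the form
`(i₁, …, i_r, t, j₁, …, j_q)` with `i₁ < ⋯ < i_r < t` and `j_q < ⋯ < j₁ < t`,
where either or both of the two blocks may be empty. -/
def IsUDWord {B : Type*} [LT B] (w : List B) : Prop :=
  ∃ (as : List B) (t : B) (bs : List B),
    w = as ++ t :: bs ∧ as.Pairwise (· < ·) ∧ bs.Pairwise (· > ·) ∧
      (∀ x ∈ as, x < t) ∧ (∀ x ∈ bs, x < t)

/-- A permutation `v` is 321-avoiding if no reduced word of `v` contains three consecutive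
letters of the form `s_i, s_{i+1}, s_i` or `s_{i+1}, s_i, s_{i+1}`. -/
def Is321Avoiding {n : ℕ} {M : CoxeterMatrix (Fin (n - 1))}
    (cs : CoxeterSystem M (Equiv.Perm (Fin n))) (v : Equiv.Perm (Fin n)) : Prop :=
  ¬ ∃ (w l r : List (Fin (n - 1))) (i j : Fin (n - 1)),
      IsReducedWordFor cs w v ∧ w = l ++ i :: j :: i :: r ∧
        ((j : ℕ) = (i : ℕ) + 1 ∨ (i : ℕ) = (j : ℕ) + 1)

section CountAux

open Finset

variable {n : ℕ}

/-- Number of inversions of a permutation of `Fin n`. -/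
private def invCount (v : Equiv.Perm (Fin n)) : ℕ :=
  (Finset.univ.filter (fun p : Fin n × Fin n => p.1 < p.2 ∧ v p.2 < v p.1)).card

private lemma swap_val_eq {x y : Fin n} (z : Fin n) :
    ((Equiv.swap x y z : Fin n) : ℕ) =
      if (z : ℕ) = x then (y : ℕ) else if (z : ℕ) = y then (x : ℕ) else z := by
  rcases eq_or_ne z x with rfl | hzx
  · simp [Equiv.swap_apply_left]
  · rcases eq_or_ne z y with rfl | hzy
    · simp [Equiv.swap_apply_right, Fin.val_ne_of_ne hzx]
    · rw [Equiv.swap_apply_of_ne_of_ne hzx hzy, if_neg (Fin.val_ne_of_ne hzx),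
        if_neg (Fin.val_ne_of_ne hzy)]

private lemma swap_adj_lt {x y p q : Fin n} (hxy : (x : ℕ) + 1 = y) (hpq : p < q)
    (h : ¬(p = x ∧ q = y)) : Equiv.swap x y p < Equiv.swap x y q := by
  have h' : ¬((p : ℕ) = x ∧ (q : ℕ) = y) := by
    rintro ⟨h1, h2⟩; exact h ⟨Fin.ext h1, Fin.ext h2⟩
  rw [Fin.lt_iff_val_lt_val] at hpq ⊢
  rw [swap_val_eq, swap_val_eq]
  split_ifs <;> omega

private lemma invCount_mul_swap {v : Equiv.Perm (Fin n)} {x y : Fin n}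
    (hxy : (x : ℕ) + 1 = y) (h : v x < v y) :
    invCount (v * Equiv.swap x y) = invCount v + 1 := by
  classical
  set σ := Equiv.swap x y with hσ
  have hxlty : x < y := by rw [Fin.lt_iff_val_lt_val]; omega
  set S := Finset.univ.filter
    (fun p : Fin n × Fin n => p.1 < p.2 ∧ (v * σ) p.2 < (v * σ) p.1) with hS
  set T := Finset.univ.filter
    (fun p : Fin n × Fin n => p.1 < p.2 ∧ v p.2 < v p.1) with hT
  have hmemS : ((x, y) : Fin n × Fin n) ∈ S := by
    simp only [hS, Finset.mem_filter, Finset.mem_univ, true_and]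
    refine ⟨hxlty, ?_⟩
    simpa [hσ, Equiv.Perm.mul_apply, Equiv.swap_apply_left, Equiv.swap_apply_right] using h
  have hmemT : ((x, y) : Fin n × Fin n) ∉ T := by
    simp only [hT, Finset.mem_filter, Finset.mem_univ, true_and, not_and]
    intro _; exact not_lt.mpr h.le
  have hmap : ∀ p : Fin n × Fin n, p ≠ (x, y) → p.1 < p.2 → ¬(σ p.1, σ p.2) = (x, y) := by
    intro p hne hlt heq
    rw [Prod.ext_iff] at heq
    have h1 : p.1 = y := by
      have := congrArg σ heq.1
      simpa [hσ, Equiv.swap_apply_left] using this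
    have h2 : p.2 = x := by
      have := congrArg σ heq.2
      simpa [hσ, Equiv.swap_apply_right] using this
    rw [h1, h2] at hlt
    exact absurd hlt (not_lt.mpr hxlty.le)
  have hSsub : ∀ p ∈ S.erase (x, y), (σ p.1, σ p.2) ∈ T.erase (x, y) := by
    intro p hp
    rw [Finset.mem_erase] at hp
    obtain ⟨hne, hpS⟩ := hp
    simp only [hS, Finset.mem_filter, Finset.mem_univ, true_and] at hpS
    obtain ⟨hlt, hinv⟩ := hpS
    rw [Finset.mem_erase]
    refine ⟨hmap p hne hlt, ?_⟩
    simp only [hT, Finset.mem_filter, Finset.mem_univ, true_and]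
    refine ⟨swap_adj_lt hxy hlt ?_, ?_⟩
    · rintro ⟨h1, h2⟩; exact hne (by rw [Prod.ext_iff]; exact ⟨h1, h2⟩)
    · simpa [hσ, Equiv.Perm.mul_apply] using hinv
  have hTsub : ∀ p ∈ T.erase (x, y), (σ p.1, σ p.2) ∈ S.erase (x, y) := by
    intro p hp
    rw [Finset.mem_erase] at hp
    obtain ⟨hne, hpT⟩ := hp
    simp only [hT, Finset.mem_filter, Finset.mem_univ, true_and] at hpT
    obtain ⟨hlt, hinv⟩ := hpT
    rw [Finset.mem_erase]
    refine ⟨hmap p hne hlt, ?_⟩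
    simp only [hS, Finset.mem_filter, Finset.mem_univ, true_and]
    refine ⟨swap_adj_lt hxy hlt ?_, ?_⟩
    · rintro ⟨h1, h2⟩; exact hne (by rw [Prod.ext_iff]; exact ⟨h1, h2⟩)
    · simpa [hσ, Equiv.Perm.mul_apply, Equiv.swap_apply_self] using hinv
  have hcard : (S.erase (x, y)).card = (T.erase (x, y)).card := by
    refine Finset.card_nbij' (fun p => (σ p.1, σ p.2)) (fun p => (σ p.1, σ p.2))
      hSsub hTsub ?_ ?_
    · intro p _; simp [hσ, Equiv.swap_apply_self]
    · intro p _; simp [hσ, Equiv.swap_apply_self]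
  have h1 : (S.erase (x, y)).card + 1 = S.card := Finset.card_erase_add_one hmemS
  have h2 : T.erase (x, y) = T := Finset.erase_eq_of_notMem hmemT
  have hSc : invCount (v * σ) = S.card := rfl
  have hTc : invCount v = T.card := rfl
  rw [h2] at hcard
  omega

private lemma invCount_mul_swap' {v : Equiv.Perm (Fin n)} {x y : Fin n}
    (hxy : (x : ℕ) + 1 = y) (h : v y < v x) :
    invCount (v * Equiv.swap x y) + 1 = invCount v := by
  have hkey : (v * Equiv.swap x y) x < (v * Equiv.swap x y) y := by
    simpa [Equiv.Perm.mul_apply, Equiv.swap_apply_left, Equiv.swap_apply_right] using h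
  have := invCount_mul_swap hxy hkey
  rw [mul_assoc, Equiv.swap_mul_self, mul_one] at this
  omega

end CountAux

section CoxAux

variable {n : ℕ} {M : CoxeterMatrix (Fin (n - 1))}
variable (cs : CoxeterSystem M (Equiv.Perm (Fin n)))

/-- The lower point of the transposition `s_i`. -/
private def finA (i : Fin (n - 1)) : Fin n := ⟨i.1, by omega⟩

/-- The upper point of the transposition `s_i`. -/
private def finB (i : Fin (n - 1)) : Fin n := ⟨i.1 + 1, by omega⟩

private lemma finA_val (i : Fin (n - 1)) : ((finA i : Fin n) : ℕ) = i.1 := rfl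
private lemma finB_val (i : Fin (n - 1)) : ((finB i : Fin n) : ℕ) = i.1 + 1 := rfl

variable (hs : ∀ i : Fin (n - 1), cs.simple i = simpleTransposition n i)

include hs

private lemma simple_eq_swap (i : Fin (n - 1)) :
    cs.simple i = Equiv.swap (finA i) (finB i) := by
  rw [hs i]; rfl

private lemma invCount_wordProd_le (ω : List (Fin (n - 1))) :
    invCount (cs.wordProd ω) ≤ ω.length := by
  induction ω using List.reverseRecOn with
  | nil =>
    rw [CoxeterSystem.wordProd_nil]
    have : invCount (1 : Equiv.Perm (Fin n)) = 0 := by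
      rw [invCount, Finset.card_eq_zero, Finset.filter_eq_empty_iff]
      rintro p - ⟨h1, h2⟩
      simp only [Equiv.Perm.one_apply] at h2
      exact absurd h1 (not_lt.mpr h2.le)
    simp [this]
  | append_singleton ω i ih =>
    rw [← List.concat_eq_append, cs.wordProd_concat, simple_eq_swap cs hs i]
    rcases lt_trichotomy (cs.wordProd ω (finA i)) (cs.wordProd ω (finB i)) with hlt | heq | hgt
    · rw [invCount_mul_swap rfl hlt]
      simp only [List.concat_eq_append, List.length_append, List.length_singleton]
      omega
    · exfalso
      have : finA i = finB i := (cs.wordProd ω).injective heq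
      have := congrArg Fin.val this
      rw [finA_val, finB_val] at this
      omega
    · have := invCount_mul_swap' (v := cs.wordProd ω) (x := finA i) (y := finB i) rfl hgt
      simp only [List.concat_eq_append, List.length_append, List.length_singleton]
      omega

private lemma length_le_invCount (hn : 2 ≤ n) (v : Equiv.Perm (Fin n)) :
    cs.length v ≤ invCount v := by
  generalize hN : invCount v = N
  induction N using Nat.strong_induction_on generalizing v with
  | _ N ih =>
    by_cases hdesc : ∃ i : Fin (n - 1), v (finB i) < v (finA i)
    · obtain ⟨i, hi⟩ := hdesc
      have h1 : invCount (v * Equiv.swap (finA i) (finB i)) + 1 = invCount v :=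
        invCount_mul_swap' rfl hi
      rw [← simple_eq_swap cs hs i] at h1
      have h2 : cs.length v ≤ cs.length (v * cs.simple i) + 1 := by
        rcases cs.length_mul_simple v i with h | h <;> omega
      have h3 : cs.length (v * cs.simple i) ≤ invCount (v * cs.simple i) :=
        ih (invCount (v * cs.simple i)) (by omega) _ rfl
      omega
    · push_neg at hdesc
      have hmono : StrictMono v := by
        obtain ⟨m, rfl⟩ : ∃ m, n = m + 1 := ⟨n - 1, by omega⟩
        rw [Fin.strictMono_iff_lt_succ]
        intro j
        have h1 := hdesc j
        have h2 : v (finA j) ≠ v (finB j) := by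
          intro h
          have := congrArg Fin.val ((v.injective h))
          rw [finA_val, finB_val] at this; omega
        have h3 : Fin.castSucc j = finA (n := m + 1) j := rfl
        have h4 : Fin.succ j = finB (n := m + 1) j := rfl
        rw [h3, h4]
        exact lt_of_le_of_ne h1 h2
      have hv1 : v = 1 := by
        letI : WellFoundedLT (Fin n) := ⟨Finite.wellFounded_of_trans_of_irrefl _⟩
        have hid : (v : Fin n → Fin n) = id :=
          (hmono.range_inj strictMono_id).mp
            (by rw [Equiv.range_eq_univ, Set.range_id])
        exact Equiv.ext fun x => congrFun hid x
      rw [hv1]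
      simp
omit hs

private lemma length_eq_invCount (hn : 2 ≤ n)
    (hs : ∀ i : Fin (n - 1), cs.simple i = simpleTransposition n i)
    (v : Equiv.Perm (Fin n)) : cs.length v = invCount v := by
  refine le_antisymm (length_le_invCount cs hs hn v) ?_
  obtain ⟨ω, hlen, hv⟩ := cs.exists_reduced_word v
  have h := invCount_wordProd_le cs hs ω
  rw [← hv] at h
  have hlen' := hlen.eq; rw [← hv] at hlen'; omega

include hs

private lemma descent_iff (hn : 2 ≤ n) (v : Equiv.Perm (Fin n)) (i : Fin (n - 1)) :
    cs.length (v * cs.simple i) < cs.length v ↔ v (finB i) < v (finA i) := by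
  rw [length_eq_invCount cs hn hs, length_eq_invCount cs hn hs, simple_eq_swap cs hs i]
  rcases lt_trichotomy (v (finA i)) (v (finB i)) with hlt | heq | hgt
  · rw [invCount_mul_swap rfl hlt]
    simp only [not_lt.mpr hlt.le, iff_false]
    omega
  · exfalso
    have : finA i = finB i := v.injective heq
    have := congrArg Fin.val this
    rw [finA_val, finB_val] at this
    omega
  · rw [← invCount_mul_swap' rfl hgt]
    simp only [hgt, iff_true]
    omega

end CoxAux

section MainAux

variable {n : ℕ} {M : CoxeterMatrix (Fin (n - 1))}
variable {cs : CoxeterSystem M (Equiv.Perm (Fin n))}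

private lemma reduced_drop_last {u : List (Fin (n - 1))} {a : Fin (n - 1)}
    {v : Equiv.Perm (Fin n)} (h : IsReducedWordFor cs (u ++ [a]) v) :
    IsReducedWordFor cs u (v * cs.simple a) ∧
      cs.length (v * cs.simple a) < cs.length v := by
  obtain ⟨hp, hl⟩ := h
  have hπ : cs.wordProd u = v * cs.simple a := by
    rw [← hp, ← List.concat_eq_append, cs.wordProd_concat, mul_assoc,
      cs.simple_mul_simple_self, mul_one]
  rw [List.length_append, List.length_singleton] at hl
  have h2 : cs.length (v * cs.simple a) ≤ u.length := by
    rw [← hπ]; exact cs.length_wordProd_le u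
  rcases cs.length_mul_simple v a with h3 | h3
  · omega
  · exact ⟨⟨hπ, by omega⟩, by omega⟩

private lemma reduced_concat {u : List (Fin (n - 1))} {a : Fin (n - 1)}
    {v : Equiv.Perm (Fin n)}
    (hd : cs.length (v * cs.simple a) < cs.length v)
    (h : IsReducedWordFor cs u (v * cs.simple a)) :
    IsReducedWordFor cs (u ++ [a]) v := by
  obtain ⟨hp, hl⟩ := h
  constructor
  · rw [← List.concat_eq_append, cs.wordProd_concat, hp, mul_assoc,
      cs.simple_mul_simple_self, mul_one]
  · rw [List.length_append, List.length_singleton]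
    rcases cs.length_mul_simple v a with h3 | h3 <;> omega

private lemma avoid_mul {v : Equiv.Perm (Fin n)} {a : Fin (n - 1)}
    (h321 : Is321Avoiding cs v)
    (hd : cs.length (v * cs.simple a) < cs.length v) :
    Is321Avoiding cs (v * cs.simple a) := by
  rintro ⟨w, l, r, i, j, hw, hweq, hij⟩
  refine h321 ⟨w ++ [a], l, r ++ [a], i, j, reduced_concat hd hw, ?_, hij⟩
  rw [hweq]; simp

private lemma not_avoid_of_adj_descents (hn : 2 ≤ n)
    (hs : ∀ i : Fin (n - 1), cs.simple i = simpleTransposition n i)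
    {v : Equiv.Perm (Fin n)} {a b : Fin (n - 1)} (hab : (b : ℕ) = (a : ℕ) + 1)
    (hda : cs.length (v * cs.simple a) < cs.length v)
    (hdb : cs.length (v * cs.simple b) < cs.length v) :
    ¬ Is321Avoiding cs v := by
  intro h321
  have hda0 := hda
  rw [descent_iff cs hs hn v a] at hda
  rw [descent_iff cs hs hn v b] at hdb
  have e1 : finA b = (finB a : Fin n) := Fin.ext (by rw [finA_val, finB_val]; omega)
  have happ1 : ∀ z, (v * cs.simple a) z = v (Equiv.swap (finA a) (finB a) z) := by
    intro z; rw [simple_eq_swap cs hs a]; rfl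
  have hd1 : cs.length (v * cs.simple a * cs.simple b) < cs.length (v * cs.simple a) := by
    rw [descent_iff cs hs hn _ b, happ1, happ1]
    have s1 : Equiv.swap (finA a) (finB a) (finB b) = finB b :=
      Equiv.swap_apply_of_ne_of_ne
        (Fin.ne_of_val_ne (by simp only [finA_val, finB_val]; omega))
        (Fin.ne_of_val_ne (by simp only [finA_val, finB_val]; omega))
    have s2 : Equiv.swap (finA a) (finB a) (finA b) = finA a := by
      rw [e1, Equiv.swap_apply_right]
    rw [s1, s2]
    exact lt_trans hdb (e1 ▸ hda)
  have happ2 : ∀ z, (v * cs.simple a * cs.simple b) z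
      = (v * cs.simple a) (Equiv.swap (finA b) (finB b) z) := by
    intro z; rw [simple_eq_swap cs hs b]; rfl
  have hd2 : cs.length (v * cs.simple a * cs.simple b * cs.simple a)
      < cs.length (v * cs.simple a * cs.simple b) := by
    rw [descent_iff cs hs hn _ a, happ2, happ2]
    have s3 : Equiv.swap (finA b) (finB b) (finB a) = finB b := by
      rw [← e1, Equiv.swap_apply_left]
    have s4 : Equiv.swap (finA b) (finB b) (finA a) = finA a :=
      Equiv.swap_apply_of_ne_of_ne
        (Fin.ne_of_val_ne (by simp only [finA_val, finB_val]; omega))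
        (Fin.ne_of_val_ne (by simp only [finA_val, finB_val]; omega))
    rw [s3, s4, happ1, happ1]
    have s5 : Equiv.swap (finA a) (finB a) (finB b) = finB b :=
      Equiv.swap_apply_of_ne_of_ne
        (Fin.ne_of_val_ne (by simp only [finA_val, finB_val]; omega))
        (Fin.ne_of_val_ne (by simp only [finA_val, finB_val]; omega))
    have s6 : Equiv.swap (finA a) (finB a) (finA a) = finB a :=
      Equiv.swap_apply_left _ _
    rw [s5, s6]
    exact e1 ▸ hdb
  obtain ⟨u, hul, huv⟩ :=
    cs.exists_reduced_word (v * cs.simple a * cs.simple b * cs.simple a)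
  have hu : IsReducedWordFor cs u (v * cs.simple a * cs.simple b * cs.simple a) :=
    ⟨huv.symm, by rw [huv]; exact hul.eq.symm⟩
  have r2 : IsReducedWordFor cs (u ++ [a]) (v * cs.simple a * cs.simple b) :=
    reduced_concat hd2 hu
  have r1 : IsReducedWordFor cs ((u ++ [a]) ++ [b]) (v * cs.simple a) :=
    reduced_concat hd1 r2
  have r0 : IsReducedWordFor cs (((u ++ [a]) ++ [b]) ++ [a]) v :=
    reduced_concat hda0 r1
  exact h321 ⟨((u ++ [a]) ++ [b]) ++ [a], u, [], a, b, r0, by simp, Or.inl hab⟩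

private lemma simple_comm
    (hs : ∀ i : Fin (n - 1), cs.simple i = simpleTransposition n i)
    {a b : Fin (n - 1)} (h : (a : ℕ) + 1 < (b : ℕ) ∨ (b : ℕ) + 1 < (a : ℕ)) :
    cs.simple a * cs.simple b = cs.simple b * cs.simple a := by
  rw [simple_eq_swap cs hs a, simple_eq_swap cs hs b]
  have hdisj : (Equiv.swap (finA a) (finB a)).Disjoint (Equiv.swap (finA b) (finB b)) := by
    intro z
    by_cases h1 : z = finA a ∨ z = finB a
    · right
      have hz : (z : ℕ) = (a : ℕ) ∨ (z : ℕ) = (a : ℕ) + 1 := by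
        rcases h1 with h1 | h1 <;> rw [h1] <;> simp [finA_val, finB_val]
      refine Equiv.swap_apply_of_ne_of_ne (Fin.ne_of_val_ne ?_) (Fin.ne_of_val_ne ?_) <;>
        simp only [finA_val, finB_val] <;> omega
    · left
      push_neg at h1
      exact Equiv.swap_apply_of_ne_of_ne h1.1 h1.2
  exact hdisj.commute.eq

end MainAux

/-- For a 321-avoiding permutation `v`, the number of occurrences of any given letter is
the same in all reduced words of `v`. -/
theorem count_eq_of_is321Avoiding {n : ℕ} (hn : 2 ≤ n) {M : CoxeterMatrix (Fin (n - 1))}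
    (cs : CoxeterSystem M (Equiv.Perm (Fin n)))
    (hs : ∀ i : Fin (n - 1), cs.simple i = simpleTransposition n i)
    (v : Equiv.Perm (Fin n)) (h321 : Is321Avoiding cs v)
    (w₁ w₂ : List (Fin (n - 1)))
    (h₁ : IsReducedWordFor cs w₁ v) (h₂ : IsReducedWordFor cs w₂ v)
    (i : Fin (n - 1)) :
    w₁.count i = w₂.count i := by
  classical
  suffices H : ∀ N (v : Equiv.Perm (Fin n)), cs.length v ≤ N → Is321Avoiding cs v →
      ∀ u₁ u₂ : List (Fin (n - 1)), IsReducedWordFor cs u₁ v → IsReducedWordFor cs u₂ v →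
        u₁.count i = u₂.count i by
    exact H (cs.length v) v le_rfl h321 w₁ w₂ h₁ h₂
  intro N
  induction N with
  | zero =>
    intro v hv _ u₁ u₂ hu₁ hu₂
    have hv0 : cs.length v = 0 := by omega
    have e1 : u₁ = [] := List.length_eq_zero_iff.mp (by rw [hu₁.2, hv0])
    have e2 : u₂ = [] := List.length_eq_zero_iff.mp (by rw [hu₂.2, hv0])
    rw [e1, e2]
  | succ N ihN =>
    intro v hv hav w₁ w₂ hw₁ hw₂
    by_cases hv0 : cs.length v = 0
    · have e1 : w₁ = [] := List.length_eq_zero_iff.mp (by rw [hw₁.2, hv0])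
      have e2 : w₂ = [] := List.length_eq_zero_iff.mp (by rw [hw₂.2, hv0])
      rw [e1, e2]
    · have hne₁ : w₁ ≠ [] := by
        intro h; apply hv0; rw [← hw₁.2, h]; rfl
      have hne₂ : w₂ ≠ [] := by
        intro h; apply hv0; rw [← hw₂.2, h]; rfl
      obtain ⟨u₁, a, rfl⟩ : ∃ u c, w₁ = u ++ [c] :=
        ⟨w₁.dropLast, w₁.getLast hne₁, (List.dropLast_append_getLast hne₁).symm⟩
      obtain ⟨u₂, b, rfl⟩ : ∃ u c, w₂ = u ++ [c] :=
        ⟨w₂.dropLast, w₂.getLast hne₂, (List.dropLast_append_getLast hne₂).symm⟩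
      obtain ⟨r₁, hda⟩ := reduced_drop_last hw₁
      obtain ⟨r₂, hdb⟩ := reduced_drop_last hw₂
      have hlen_a : cs.length (v * cs.simple a) ≤ N := by
        rcases cs.length_mul_simple v a with h | h <;> omega
      have hlen_b : cs.length (v * cs.simple b) ≤ N := by
        rcases cs.length_mul_simple v b with h | h <;> omega
      have hava := avoid_mul hav hda
      have havb := avoid_mul hav hdb
      by_cases hab : a = b
      · subst hab
        have := ihN (v * cs.simple a) hlen_a hava u₁ u₂ r₁ r₂
        simp only [List.count_append]
        rw [this]
      · have hvab : (a : ℕ) ≠ (b : ℕ) := fun h => hab (Fin.ext h)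
        by_cases hadj : (b : ℕ) = (a : ℕ) + 1 ∨ (a : ℕ) = (b : ℕ) + 1
        · exfalso
          rcases hadj with h | h
          · exact not_avoid_of_adj_descents hn hs h hda hdb hav
          · exact not_avoid_of_adj_descents hn hs h hdb hda hav
        · push_neg at hadj
          have hfar : (a : ℕ) + 1 < (b : ℕ) ∨ (b : ℕ) + 1 < (a : ℕ) := by omega
          have hcomm := simple_comm hs hfar
          have happ : ∀ z, (v * cs.simple a) z = v (Equiv.swap (finA a) (finB a) z) := by
            intro z; rw [simple_eq_swap cs hs a]; rfl
          have hdb' : cs.length (v * cs.simple a * cs.simple b)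
              < cs.length (v * cs.simple a) := by
            rw [descent_iff cs hs hn _ b]
            rw [descent_iff cs hs hn v b] at hdb
            have s1 : Equiv.swap (finA a) (finB a) (finB b) = finB b :=
              Equiv.swap_apply_of_ne_of_ne
                (Fin.ne_of_val_ne (by simp only [finA_val, finB_val]; omega))
                (Fin.ne_of_val_ne (by simp only [finA_val, finB_val]; omega))
            have s2 : Equiv.swap (finA a) (finB a) (finA b) = finA b :=
              Equiv.swap_apply_of_ne_of_ne
                (Fin.ne_of_val_ne (by simp only [finA_val, finB_val]; omega))
                (Fin.ne_of_val_ne (by simp only [finA_val, finB_val]; omega))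
            rw [happ, happ, s1, s2]
            exact hdb
          obtain ⟨u, hul, huv⟩ := cs.exists_reduced_word (v * cs.simple a * cs.simple b)
          have hu : IsReducedWordFor cs u (v * cs.simple a * cs.simple b) := ⟨huv.symm, by rw [huv]; exact hul.eq.symm⟩
          have w₃red : IsReducedWordFor cs (u ++ [b]) (v * cs.simple a) :=
            reduced_concat hdb' hu
          have hswap : v * cs.simple a * cs.simple b = v * cs.simple b * cs.simple a := by
            rw [mul_assoc, mul_assoc, hcomm]
          have l1 : cs.length (v * cs.simple a) + 1 = cs.length v := by
            rcases cs.length_mul_simple v a with h | h <;> omega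
          have l2 : cs.length (v * cs.simple b) + 1 = cs.length v := by
            rcases cs.length_mul_simple v b with h | h <;> omega
          have hda' : cs.length (v * cs.simple b * cs.simple a)
              < cs.length (v * cs.simple b) := by
            rw [← hswap]; omega
          have hu2 : IsReducedWordFor cs u (v * cs.simple b * cs.simple a) := by
            rw [← hswap]; exact hu
          have w₄red : IsReducedWordFor cs (u ++ [a]) (v * cs.simple b) :=
            reduced_concat hda' hu2
          have e₁ := ihN (v * cs.simple a) hlen_a hava u₁ (u ++ [b]) r₁ w₃red
          have e₂ := ihN (v * cs.simple b) hlen_b havb u₂ (u ++ [a]) r₂ w₄red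
          simp only [List.count_append] at e₁ e₂ ⊢
          omega
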